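/- Fix an integer L ≥ 2 and consider the family of closed axis-parallel boxes in ℝ³ with side-length multiset {1,1,L} (the long side along any of the three axes). The union over the three axis orientations of the lattices generated by the vertex sets of an axis-aligned 1×1×L box stabs every such box; consequently, any sub-family of such boxes contained in a ball of radius 2L can be stabbed by O(L²) points, so the family has stabbing number O(L^{2/3}). -/

import Mathlib

/-- An axis-parallel box in `ℝ³` with side-length multiset `{1,1,L}`,
the long side along axis `j`. -/
def IsCanonicalBox3 (L : ℝ) (b : Set (EuclideanSpace ℝ (Fin 3))) : Prop :=
  ∃ (a : Fin 3 → ℝ) (j : Fin 3),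
    b = {x | ∀ i : Fin 3, a i ≤ x i ∧ x i ≤ a i + (if i = j then L else 1)}

/-- The union over the three orientations `j` of the lattices `Λ_j` generated by the
vertices of an axis-aligned `1×1×L` box with long side along axis `j`
(e.g. `Λ₃ = ℤ × ℤ × Lℤ`). -/
def BoxLattice (L : ℝ) : Set (EuclideanSpace ℝ (Fin 3)) :=
  {x | ∃ (p : Fin 3 → ℤ) (j : Fin 3),
    ∀ i : Fin 3, x i = if i = j then L * (p i : ℝ) else (p i : ℝ)}

lemma coord_abs_le_dist (x y : EuclideanSpace ℝ (Fin 3)) (i : Fin 3) :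
    |x i - y i| ≤ dist x y := by
  rw [EuclideanSpace.dist_eq]
  have h1 : |x i - y i| = Real.sqrt (dist (x i) (y i) ^ 2) := by
    rw [Real.sqrt_sq_eq_abs, Real.dist_eq, abs_abs]
  rw [h1]
  apply Real.sqrt_le_sqrt
  exact Finset.single_le_sum (f := fun k => dist (x k) (y k) ^ 2)
    (fun j _ => sq_nonneg _) (Finset.mem_univ i)

/-- the stabbing point of a box -/
noncomputable def stabPt (L : ℝ) (a : Fin 3 → ℝ) (j : Fin 3) :
    EuclideanSpace ℝ (Fin 3) :=
  WithLp.toLp 2 (fun i => if i = j then L * (⌈a j / L⌉ : ℝ) else (⌈a i⌉ : ℝ))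

noncomputable def stabP (L : ℝ) (a : Fin 3 → ℝ) (j : Fin 3) : Fin 3 → ℤ :=
  fun i => if i = j then ⌈a j / L⌉ else ⌈a i⌉

lemma stabPt_apply (L : ℝ) (a : Fin 3 → ℝ) (j i : Fin 3) :
    stabPt L a j i = if i = j then L * ((stabP L a j i : ℤ) : ℝ)
      else ((stabP L a j i : ℤ) : ℝ) := by
  unfold stabPt stabP
  by_cases h : i = j <;> simp [h]

lemma stabPt_mem_lattice (L : ℝ) (a : Fin 3 → ℝ) (j : Fin 3) :
    stabPt L a j ∈ BoxLattice L :=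
  ⟨stabP L a j, j, fun i => stabPt_apply L a j i⟩

lemma stabPt_mem_box (L : ℝ) (hL : 1 ≤ L) (a : Fin 3 → ℝ) (j : Fin 3) (i : Fin 3) :
    a i ≤ stabPt L a j i ∧ stabPt L a j i ≤ a i + (if i = j then L else 1) := by
  have hL0 : (0:ℝ) < L := lt_of_lt_of_le one_pos hL
  unfold stabPt
  simp only [WithLp.ofLp_toLp]
  by_cases h : i = j
  · subst h
    rw [if_pos rfl, if_pos rfl]
    have hc1 := Int.le_ceil (a i / L)
    have hc2 := Int.ceil_lt_add_one (a i / L)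
    have h1 : L * (a i / L) = a i := by field_simp
    have h2 : L * (a i / L) ≤ L * (⌈a i / L⌉ : ℝ) :=
      mul_le_mul_of_nonneg_left hc1 (le_of_lt hL0)
    have h3 : L * (⌈a i / L⌉ : ℝ) ≤ L * (a i / L + 1) :=
      mul_le_mul_of_nonneg_left (le_of_lt hc2) (le_of_lt hL0)
    have h4 : L * (a i / L + 1) = a i + L := by field_simp
    constructor <;> linarith
  · rw [if_neg h, if_neg h]
    exact ⟨Int.le_ceil _, by linarith [Int.ceil_lt_add_one (a i)]⟩

theorem canonical_boxes_stabbing_number :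
    ∃ C : ℝ, 0 < C ∧ ∀ L : ℕ, 2 ≤ L →
      (∀ b : Set (EuclideanSpace ℝ (Fin 3)), IsCanonicalBox3 (L : ℝ) b →
        ∃ p ∈ BoxLattice (L : ℝ), p ∈ b) ∧
      (∀ z : EuclideanSpace ℝ (Fin 3),
        ∃ P : Finset (EuclideanSpace ℝ (Fin 3)),
          (↑P : Set (EuclideanSpace ℝ (Fin 3))) ⊆ BoxLattice (L : ℝ) ∧
          (P.card : ℝ) ≤ C * (L : ℝ) ^ 2 ∧
          ∀ b : Set (EuclideanSpace ℝ (Fin 3)), IsCanonicalBox3 (L : ℝ) b →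
            b ⊆ Metric.closedBall z (2 * L) → ∃ p ∈ P, p ∈ b) := by
  classical
  use 1000, by norm_num
  intro L hL
  have hL1 : (1:ℝ) ≤ (L:ℝ) := by exact_mod_cast Nat.one_le_of_lt hL
  have hL0 : (0:ℝ) < (L:ℝ) := lt_of_lt_of_le one_pos hL1
  constructor
  · rintro b ⟨a, j, rfl⟩
    exact ⟨stabPt (L:ℝ) a j, stabPt_mem_lattice _ a j, stabPt_mem_box _ hL1 a j⟩
  · intro z
    -- ranges for lattice coordinates
    set lo : Fin 3 → Fin 3 → ℤ := fun i j =>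
      if i = j then ⌈(z i - 2*(L:ℝ)) / L⌉ else ⌈z i - 2*(L:ℝ)⌉ with hlo
    set hi : Fin 3 → Fin 3 → ℤ := fun i j =>
      if i = j then ⌊(z i + 2*(L:ℝ)) / L⌋ else ⌊z i + 2*(L:ℝ)⌋ with hhi
    set D : Fin 3 → Finset (Fin 3 → ℤ) := fun j =>
      Fintype.piFinset (fun i => Finset.Icc (lo i j) (hi i j)) with hD
    set φ : Fin 3 → (Fin 3 → ℤ) → EuclideanSpace ℝ (Fin 3) := fun j p =>
      WithLp.toLp 2 (fun i => if i = j then (L:ℝ) * (p i : ℝ) else (p i : ℝ)) with hφ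
    set P : Finset (EuclideanSpace ℝ (Fin 3)) :=
      Finset.univ.biUnion (fun j => (D j).image (φ j)) with hP
    refine ⟨P, ?_, ?_, ?_⟩
    · -- P ⊆ BoxLattice
      intro x hx
      rw [Finset.mem_coe, hP, Finset.mem_biUnion] at hx
      obtain ⟨j, -, hx⟩ := hx
      rw [Finset.mem_image] at hx
      obtain ⟨p, -, rfl⟩ := hx
      exact ⟨p, j, fun i => rfl⟩
    · -- card bound
      have hcard : P.card ≤ 3 * (5 * (4*L+1)^2) := by
        calc P.card ≤ ∑ j : Fin 3, ((D j).image (φ j)).card :=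
              Finset.card_biUnion_le
          _ ≤ ∑ _j : Fin 3, (5 * (4*L+1)^2) := by
              apply Finset.sum_le_sum
              intro j _
              calc ((D j).image (φ j)).card ≤ (D j).card := Finset.card_image_le
                _ = ∏ i : Fin 3, (Finset.Icc (lo i j) (hi i j)).card := by
                    rw [hD]; exact Fintype.card_piFinset _
                _ ≤ ∏ i : Fin 3, (if i = j then 5 else (4*L+1)) := by
                    apply Finset.prod_le_prod'
                    intro i _
                    simp only [hlo, hhi]
                    by_cases h : i = j
                    · rw [if_pos h, if_pos h, if_pos h, Int.card_Icc]
                      have h1 : (⌊(z i + 2*(L:ℝ)) / L⌋ : ℝ) ≤ (z i + 2*L) / L :=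
                        Int.floor_le _
                      have h2 : (z i - 2*(L:ℝ)) / L ≤ (⌈(z i - 2*(L:ℝ)) / L⌉ : ℝ) :=
                        Int.le_ceil _
                      have h3 : (z i + 2*(L:ℝ)) / L - (z i - 2*L) / L = 4 := by
                        field_simp; ring
                      have hZ : ⌊(z i + 2*(L:ℝ)) / L⌋ - ⌈(z i - 2*(L:ℝ)) / L⌉ ≤ 4 := by
                        have hr : ((⌊(z i + 2*(L:ℝ)) / L⌋ : ℝ)) - (⌈(z i - 2*(L:ℝ)) / L⌉ : ℝ) ≤ 4 := by
                          linarith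
                        exact_mod_cast hr
                      omega
                    · rw [if_neg h, if_neg h, if_neg h, Int.card_Icc]
                      have h1 : (⌊z i + 2*(L:ℝ)⌋ : ℝ) ≤ z i + 2*L := Int.floor_le _
                      have h2 : (z i - 2*(L:ℝ)) ≤ (⌈z i - 2*(L:ℝ)⌉ : ℝ) := Int.le_ceil _
                      have hZ : ⌊z i + 2*(L:ℝ)⌋ - ⌈z i - 2*(L:ℝ)⌉ ≤ 4*(L:ℤ) := by
                        have hr : ((⌊z i + 2*(L:ℝ)⌋ : ℝ)) - (⌈z i - 2*(L:ℝ)⌉ : ℝ) ≤ 4*(L:ℝ) := by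
                          linarith
                        exact_mod_cast hr
                      omega
                _ = 5 * (4*L+1)^2 := by
                    rw [Fin.prod_univ_three]
                    fin_cases j <;> simp <;> ring
          _ = 3 * (5 * (4*L+1)^2) := by
              rw [Finset.sum_const, Finset.card_univ]
              simp [Fintype.card_fin]
      calc (P.card : ℝ) ≤ (3 * (5 * (4*L+1)^2) : ℕ) := by exact_mod_cast hcard
        _ ≤ 1000 * (L:ℝ)^2 := by
            push_cast
            nlinarith [sq_nonneg ((L:ℝ) - 1)]
    · -- stabbing
      rintro b ⟨a, j, rfl⟩ hsub
      refine ⟨stabPt (L:ℝ) a j, ?_, stabPt_mem_box _ hL1 a j⟩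
      have hmem : stabPt (L:ℝ) a j ∈ Metric.closedBall z (2 * L) :=
        hsub (stabPt_mem_box _ hL1 a j)
      rw [Metric.mem_closedBall] at hmem
      have hcoord : ∀ i : Fin 3, |stabPt (L:ℝ) a j i - z i| ≤ 2*L := fun i =>
        le_trans (coord_abs_le_dist _ _ i) hmem
      rw [hP]
      rw [Finset.mem_biUnion]
      refine ⟨j, Finset.mem_univ j, ?_⟩
      rw [Finset.mem_image]
      refine ⟨stabP (L:ℝ) a j, ?_, ?_⟩
      · rw [hD, Fintype.mem_piFinset]
        intro i
        rw [Finset.mem_Icc]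
        have h := hcoord i
        rw [abs_le] at h
        have hpt := stabPt_apply (L:ℝ) a j i
        by_cases hij : i = j
        · subst hij
          rw [if_pos rfl] at hpt
          rw [hpt] at h
          simp only [hlo, hhi, if_pos rfl]
          unfold stabP at h ⊢
          rw [if_pos rfl] at h ⊢
          constructor
          · rw [Int.ceil_le, div_le_iff₀ hL0]
            nlinarith [h.1]
          · rw [Int.le_floor, le_div_iff₀ hL0]
            nlinarith [h.2]
        · rw [if_neg hij] at hpt
          rw [hpt] at h
          simp only [hlo, hhi, if_neg hij]
          exact ⟨Int.ceil_le.mpr (by linarith [h.1]), Int.le_floor.mpr (by linarith [h.2])⟩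
      · rw [hφ]
        ext i
        exact (stabPt_apply (L:ℝ) a j i).symm
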